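/- arXiv:2312.02044 — 3 statements merged into one kernel-verified Lean document; each statement's English description precedes it below -/
import Mathlib

section
/- Let q ≥ 2, let ν ≥ 4/c₁ for a constant 0 < c₁ < 1, and let δ₁ > 0 satisfy δ₁ ≤ c₁/(2 log q). Set β₁ = 1 − δ₁ and suppose x ≥ q^ν. Then 1 − x^(β₁−1)/β₁ ≥ (4 δ₁/(3 c₁)) · log q − δ₁. -/
set_option maxHeartbeats 1000000

/-- Exceptional-zero estimate: if `q ≥ 2`, `ν ≥ 4/c₁` with `0 < c₁ < 1`,
`0 < δ₁ ≤ c₁/(2 log q)`, `β₁ = 1 − δ₁` and `x ≥ q^ν`, then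
`1 − x^(β₁−1)/β₁ ≥ (4δ₁/(3c₁))·log q − δ₁`. -/
theorem exceptional_zero_estimate (q : ℝ) (hq : 2 ≤ q) (c₁ ν δ₁ x : ℝ)
    (hc₁0 : 0 < c₁) (hc₁1 : c₁ < 1) (hν : 4 / c₁ ≤ ν)
    (hδ₁0 : 0 < δ₁) (hδ₁ : δ₁ ≤ c₁ / (2 * Real.log q))
    (hx : q ^ ν ≤ x) :
    1 - x ^ ((1 - δ₁) - 1) / (1 - δ₁) ≥ (4 * δ₁ / (3 * c₁)) * Real.log q - δ₁ := by
  have hq0 : (0:ℝ) < q := by linarith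
  have hl2 : (0.6931471803:ℝ) < Real.log 2 := Real.log_two_gt_d9
  have hL2 : Real.log 2 ≤ Real.log q := Real.log_le_log (by norm_num) hq
  have hL0 : 0 < Real.log q := by linarith
  set L := Real.log q with hLdef
  set t := δ₁ * L / c₁ with ht
  have ht0 : 0 < t := by positivity
  have hδL : δ₁ * L = t * c₁ := by rw [ht, div_mul_cancel₀ _ hc₁0.ne']
  have hthalf : t ≤ 1/2 := by
    have h1 : δ₁ * (2 * L) ≤ c₁ := by
      rw [← le_div_iff₀ (by positivity)]; exact hδ₁
    rw [ht, div_le_iff₀ hc₁0]; linarith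
  have hδlog2 : δ₁ * Real.log 2 ≤ t := by
    have h1 : δ₁ * Real.log 2 ≤ δ₁ * L := by
      exact mul_le_mul_of_nonneg_left hL2 hδ₁0.le
    nlinarith
  have hδ1 : δ₁ < 1 := by nlinarith
  have hν0 : 0 < ν := lt_of_lt_of_le (by positivity) hν
  have hx0 : 0 < x := lt_of_lt_of_le (Real.rpow_pos_of_pos hq0 ν) hx
  have hlogx : 4 * t ≤ δ₁ * Real.log x := by
    have h1 : ν * L ≤ Real.log x := by
      rw [← Real.log_rpow hq0]
      exact Real.log_le_log (Real.rpow_pos_of_pos hq0 ν) hx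
    have h2 : (4 / c₁) * L ≤ ν * L := mul_le_mul_of_nonneg_right hν hL0.le
    have h3 : δ₁ * ((4 / c₁) * L) ≤ δ₁ * Real.log x := by
      have := le_trans h2 h1
      exact mul_le_mul_of_nonneg_left this hδ₁0.le
    have h4 : δ₁ * ((4 / c₁) * L) = 4 * t := by
      rw [ht]; ring
    linarith [h4 ▸ h3]
  have hxpow : x ^ ((1 - δ₁) - 1) = Real.exp (-(δ₁ * Real.log x)) := by
    rw [Real.rpow_def_of_pos hx0]
    ring_nf
  have hexp : Real.exp (-(δ₁ * Real.log x)) ≤ 1 / (1 + 2*t)^2 := by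
    have h1 : (1 + 2*t)^2 ≤ Real.exp (4*t) := by
      have h2 : (1:ℝ) + 2*t ≤ Real.exp (2*t) := by
        have := Real.add_one_le_exp (2*t); linarith
      have h3 : Real.exp (4*t) = Real.exp (2*t) * Real.exp (2*t) := by
        rw [← Real.exp_add]; ring_nf
      rw [h3]; nlinarith [Real.exp_pos (2*t)]
    have h2 : Real.exp (-(δ₁ * Real.log x)) ≤ Real.exp (-(4*t)) :=
      Real.exp_le_exp.mpr (by linarith)
    have h3 : Real.exp (-(4*t)) ≤ 1 / (1 + 2*t)^2 := by
      rw [Real.exp_neg, inv_eq_one_div]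
      exact one_div_le_one_div_of_le (by positivity) h1
    linarith
  have ha : (0.6931:ℝ) * δ₁ ≤ t := by nlinarith
  clear_value t
  have hA : δ₁ * (4*t/3 - δ₁) ≥ -(0.16) * t^2 := by
    nlinarith [mul_nonneg (sub_nonneg.mpr ha) hδ₁0.le, mul_nonneg (sub_nonneg.mpr ha) ht0.le]
  have hE : δ₁ * (4*t/3 - δ₁) * (1 + 4*t + 4*t^2) ≥ -(0.64) * t^2 := by
    have hF1 : (1:ℝ) ≤ 1 + 4*t + 4*t^2 := by nlinarith
    have hF4 : 1 + 4*t + 4*t^2 ≤ 4 := by nlinarith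
    rcases le_or_gt 0 (δ₁ * (4*t/3 - δ₁)) with h | h
    · nlinarith
    · nlinarith
  have hkey : 1 / (1 + 2*t)^2 ≤ (1 - δ₁) * (1 + δ₁ - 4*t/3) := by
    rw [div_le_iff₀ (by positivity)]
    have hB : (1 - δ₁) * (1 + δ₁ - 4*t/3) * (1 + 2*t)^2 - 1
        = (4*t/3) * (2 - t - 4*t^2) + δ₁ * (4*t/3 - δ₁) * (1 + 4*t + 4*t^2) := by
      ring
    have hC : (1/2:ℝ) ≤ 2 - t - 4*t^2 := by nlinarith
    nlinarith
  have hRHS : (4 * δ₁ / (3 * c₁)) * L = 4*t/3 := by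
    rw [ht]; ring
  rw [hxpow, hRHS]
  have h1δ : (0:ℝ) < 1 - δ₁ := by linarith
  have hE : Real.exp (-(δ₁ * Real.log x)) / (1 - δ₁) ≤ 1 + δ₁ - 4*t/3 := by
    rw [div_le_iff₀ h1δ]
    nlinarith [le_trans hexp hkey]
  linarith
end

section
/- Let K be a number field of degree d and let α₁, α₂ ∈ K be such that K = Q(α₁, α₂). Then there exist integers m₁, m₂ with 0 ≤ m₁, m₂ < d such that K = Q(m₁α₁ + m₂α₂). -/
open IntermediateField Module

private theorem aux_exists_ne (K : Type*) [Field K] [NumberField K] (τ : K →ₐ[ℚ] ℂ) (β : K)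
    (h : IntermediateField.adjoin ℚ ({β} : Set K) ≠ ⊤) :
    ∃ σ : K →ₐ[ℚ] ℂ, σ ≠ τ ∧ σ β = τ β := by
  set L := IntermediateField.adjoin ℚ ({β} : Set K) with hL
  letI : Algebra L ℂ := ((τ.comp L.val).toRingHom).toAlgebra
  haveI : IsScalarTower ℚ L ℂ := IsScalarTower.of_algebraMap_eq fun q => by
    show algebraMap ℚ ℂ q = (τ.comp L.val) (algebraMap ℚ L q)
    exact ((τ.comp L.val).commutes q).symm
  haveI hsep : Algebra.IsSeparable (↥L) K :=
    Algebra.isSeparable_tower_top_of_isSeparable ℚ L K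
  have hlt : finrank ℚ (↥L) < finrank ℚ K := by
    have hne : L.toSubmodule ≠ ⊤ := by
      intro htop
      apply h
      apply IntermediateField.toSubalgebra_injective
      apply Subalgebra.toSubmodule_injective
      simpa using htop
    exact Submodule.finrank_lt hne
  have hmul : finrank ℚ (↥L) * finrank (↥L) K = finrank ℚ K := finrank_mul_finrank ℚ (↥L) K
  have hpos : 0 < finrank (↥L) K := finrank_pos
  have h2 : 1 < finrank (↥L) K := by
    rcases Nat.lt_or_ge 1 (finrank (↥L) K) with h' | h'
    · exact h'
    · exfalso
      have : finrank (↥L) K = 1 := le_antisymm h' hpos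
      rw [this, mul_one] at hmul
      omega
  have hcard : Fintype.card (K →ₐ[↥L] ℂ) = finrank (↥L) K := AlgHom.card (↥L) K ℂ
  obtain ⟨π₁, π₂, hne⟩ := Fintype.exists_pair_of_one_lt_card (by rw [hcard]; exact h2)
  have hfix : ∀ π : K →ₐ[↥L] ℂ, π β = τ β := by
    intro π
    have hmem : β ∈ L := by
      rw [hL]
      exact IntermediateField.subset_adjoin _ _ rfl
    have : β = algebraMap (↥L) K ⟨β, hmem⟩ := rfl
    rw [this, π.commutes]
    rfl
  have hner : (π₁.restrictScalars ℚ) ≠ (π₂.restrictScalars ℚ) :=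
    fun hh => hne (AlgHom.restrictScalars_injective ℚ hh)
  by_cases hτ : π₁.restrictScalars ℚ = τ
  · exact ⟨π₂.restrictScalars ℚ, fun hh => hner (hτ.trans hh.symm), hfix π₂⟩
  · exact ⟨π₁.restrictScalars ℚ, hτ, hfix π₁⟩

/-- Primitive element with small integer coefficients: if `K` is a number field of degree `d`
and `K = ℚ(α₁, α₂)`, then there are integers `0 ≤ m₁, m₂ < d` with `K = ℚ(m₁α₁ + m₂α₂)`. -/
theorem small_primitive_element (K : Type*) [Field K] [NumberField K] (d : ℕ)
    (hd : Module.finrank ℚ K = d) (α₁ α₂ : K)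
    (hgen : IntermediateField.adjoin ℚ ({α₁, α₂} : Set K) = ⊤) :
    ∃ m₁ m₂ : ℕ, m₁ < d ∧ m₂ < d ∧
      IntermediateField.adjoin ℚ ({(m₁ : K) * α₁ + (m₂ : K) * α₂} : Set K) = ⊤ := by
  have hd0 : 0 < d := hd ▸ Module.finrank_pos
  rcases Nat.lt_or_ge 1 d with hd2 | hd1
  · -- d ≥ 2
    by_contra hcon
    push_neg at hcon
    have hcard : Fintype.card (K →ₐ[ℚ] ℂ) = d := by
      rw [AlgHom.card, hd]
    obtain ⟨τ⟩ : Nonempty (K →ₐ[ℚ] ℂ) := by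
      rw [← Fintype.card_pos_iff, hcard]; omega
    have hex : ∀ c : Fin d, ∃ σ : K →ₐ[ℚ] ℂ, σ ≠ τ ∧
        σ (((1 : ℕ) : K) * α₁ + ((c : ℕ) : K) * α₂) = τ (((1 : ℕ) : K) * α₁ + ((c : ℕ) : K) * α₂) :=
      fun c => aux_exists_ne K τ _ (hcon 1 c hd2 c.isLt)
    choose f hfne hffix using hex
    have hnotinj : ¬ Function.Injective f := by
      intro hinj
      have hbij : Function.Bijective f :=
        (Fintype.bijective_iff_injective_and_card f).mpr ⟨hinj, by simp [hcard]⟩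
      obtain ⟨c, hc⟩ := hbij.surjective τ
      exact hfne c hc
    obtain ⟨c, c', hfeq, hcc'⟩ := Function.not_injective_iff.mp hnotinj
    set σ := f c with hσ
    have e1 : σ α₁ + ((c : ℕ) : ℂ) * σ α₂ = τ α₁ + ((c : ℕ) : ℂ) * τ α₂ := by
      have := hffix c
      simpa [map_add, map_mul, map_natCast] using this
    have e2 : σ α₁ + ((c' : ℕ) : ℂ) * σ α₂ = τ α₁ + ((c' : ℕ) : ℂ) * τ α₂ := by
      have := hffix c'
      rw [← hfeq] at this
      simpa [map_add, map_mul, map_natCast] using this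
    have hcne : ((c : ℕ) : ℂ) ≠ ((c' : ℕ) : ℂ) := by
      exact_mod_cast fun hh => hcc' (Fin.val_injective (Nat.cast_injective hh))
    have hα₂ : σ α₂ = τ α₂ := by
      have key : (((c : ℕ) : ℂ) - ((c' : ℕ) : ℂ)) * (σ α₂ - τ α₂) = 0 := by
        linear_combination e1 - e2
      rcases mul_eq_zero.mp key with hk | hk
      · exact absurd (sub_eq_zero.mp hk) hcne
      · exact sub_eq_zero.mp hk
    have hα₁ : σ α₁ = τ α₁ := by
      linear_combination e1 - ((c : ℕ) : ℂ) * hα₂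
    have hστ : σ = τ := by
      apply AlgHom.ext
      intro x
      have hx : x ∈ IntermediateField.adjoin ℚ ({α₁, α₂} : Set K) := hgen ▸ trivial
      induction hx using IntermediateField.adjoin_induction with
      | mem y hy => rcases hy with h | h <;> subst h <;> assumption
      | algebraMap y => simp
      | add x y _ _ hx hy => simp [hx, hy]
      | inv x _ hx => simp [hx]
      | mul x y _ _ hx hy => simp [hx, hy]
    exact hfne c hστ
  · -- d = 1
    refine ⟨0, 0, hd0, hd0, ?_⟩
    have h1 : d = 1 := le_antisymm hd1 hd0
    have htop : (⊥ : IntermediateField ℚ K) = ⊤ := by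
      have : finrank ℚ (⊤ : IntermediateField ℚ K) = 1 := by
        rw [IntermediateField.finrank_top', hd, h1]
      exact (IntermediateField.finrank_eq_one_iff.mp this).symm
    rw [eq_top_iff, ← htop]
    exact bot_le
end

section
/- Let n > 1 and let p < q be primes, M = Q((p/q)^(1/n)). Then (pq)^(n−1) divides the discriminant Δ_M of M. Consequently H((p/q)^(1/n)) = q^(1/n) ≤ 2^(1/(2n)) · |Δ_M|^(1/(2n(n−1))). -/
open Polynomial

/-- The Mahler measure of a complex polynomial. -/
noncomputable def mahlerMeasure (p : Polynomial ℂ) : ℝ :=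
  ‖p.leadingCoeff‖ * (p.roots.map (fun z => max 1 ‖z‖)).prod

/-- A primitive integer polynomial proportional to the minimal polynomial of `α` over `ℚ`. -/
noncomputable def intMinpoly (α : ℂ) : Polynomial ℤ :=
  (IsLocalization.integerNormalization (nonZeroDivisors ℤ) (minpoly ℚ α)).primPart

/-- The absolute multiplicative Weil height of an algebraic number `α`, i.e.
`H(α) = M(f)^(1/deg α)` where `f` is the primitive integer minimal polynomial of `α` and
`M` is the Mahler measure; this agrees with
`∏_{v ∈ M_K} max{1,|α|_v}^{d_v/[K:ℚ]}` for any number field `K ∋ α`. -/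
noncomputable def weilHeight (α : ℂ) : ℝ :=
  _root_.mahlerMeasure ((intMinpoly α).map (Int.castRingHom ℂ)) ^ (((minpoly ℚ α).natDegree : ℝ)⁻¹)

open IntermediateField

open NumberField Module

lemma monic_eq_of_dvd {R : Type*} [CommRing R] [IsDomain R] {f g : R[X]} (hf : f.Monic) (hg : g.Monic)
    (h : g ∣ f) (hdeg : f.natDegree ≤ g.natDegree) : g = f := by
  obtain ⟨t, ht⟩ := h
  have hg0 : g ≠ 0 := hg.ne_zero
  have ht0 : t ≠ 0 := by rintro rfl; rw [mul_zero] at ht; exact hf.ne_zero ht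
  have hdeg' : f.natDegree = g.natDegree + t.natDegree := by
    rw [ht]; exact natDegree_mul hg0 ht0
  have htdeg : t.natDegree = 0 := by omega
  have htm : t.Monic := by
    have := hf.leadingCoeff
    rw [ht, leadingCoeff_mul, hg.leadingCoeff, one_mul] at this
    exact monic_of_natDegree_le_of_coeff_eq_one 0 (le_of_eq htdeg) (by simpa [leadingCoeff, htdeg] using this)
  have : t = 1 := eq_one_of_monic_natDegree_zero htm htdeg
  rw [ht, this, mul_one]


lemma eisen_irred {n : ℕ} (hn : 0 < n) {r c : ℤ} (hr : Prime r) (hrc : r ∣ c) (hrc2 : ¬ r^2 ∣ c) :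
    ((X^n - C c : ℤ[X])).IsEisensteinAt (Ideal.span {r}) ∧ Irreducible (X^n - C c : ℤ[X]) ∧
    Irreducible (X^n - C (c : ℚ) : ℚ[X]) := by
  have hc0 : c ≠ 0 := by rintro rfl; exact hrc2 (dvd_zero _)
  have hmon : (X^n - C c : ℤ[X]).Monic := monic_X_pow_sub_C c hn.ne'
  have hdeg : (X^n - C c : ℤ[X]).natDegree = n := natDegree_X_pow_sub_C
  have hei : ((X^n - C c : ℤ[X])).IsEisensteinAt (Ideal.span {r}) := by
    constructor
    · rw [hmon.leadingCoeff, Ideal.mem_span_singleton]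
      exact fun h => hr.not_unit (isUnit_of_dvd_one h)
    · intro i hi
      rw [hdeg] at hi
      rw [coeff_sub, coeff_X_pow, coeff_C, Ideal.mem_span_singleton]
      rcases Nat.eq_zero_or_pos i with h0 | h0
      · rw [h0, if_neg (show ¬(0 = n) by omega), if_pos rfl, zero_sub]
        exact hrc.neg_right
      · simp [Nat.ne_of_lt hi, h0.ne']
    · intro h
      rw [Ideal.span_singleton_pow, Ideal.mem_span_singleton] at h
      rw [coeff_sub, coeff_X_pow, coeff_C] at h
      rw [if_neg (show ¬(0 = n) by omega), if_pos rfl, zero_sub, dvd_neg] at h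
      exact hrc2 h
  have hirr : Irreducible (X^n - C c : ℤ[X]) := hei.irreducible
    (Ideal.span_singleton_prime hr.ne_zero |>.mpr hr) hmon.isPrimitive (by omega)
  refine ⟨hei, hirr, ?_⟩
  have := (Polynomial.IsPrimitive.Int.irreducible_iff_irreducible_map_cast hmon.isPrimitive).1 hirr
  convert this using 1
  simp [Polynomial.map_sub, Polynomial.map_pow]

lemma discr_pb_X_pow_sub_C {K : Type*} [Field K] [NumberField K] (B : PowerBasis ℚ K)
    {n : ℕ} (hn : 0 < n) {c : ℤ} (hmin : minpoly ℚ B.gen = X^n - C (c:ℚ)) :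
    ∃ G : ℤ, (Algebra.discr ℚ ⇑B.basis) = (G : ℚ) ∧ c ^ (n-1) ∣ G := by
  set m := Module.finrank ℚ K
  have hder : derivative (X^n - C (c:ℚ)) = (n : ℚ[X]) * X^(n-1) := by
    rw [derivative_sub, derivative_C, sub_zero, derivative_X_pow]
    simp
  have haev : aeval B.gen (derivative (R := ℚ) (minpoly ℚ B.gen))
      = algebraMap ℚ K (n:ℚ) * B.gen^(n-1) := by
    rw [hmin, hder]
    simp [map_mul, aeval_X_pow]
  have hnorm : Algebra.norm ℚ (aeval B.gen (derivative (R := ℚ) (minpoly ℚ B.gen)))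
      = (n:ℚ)^m * ((-1)^B.dim * (-(c:ℚ)))^(n-1) := by
    rw [haev, map_mul, Algebra.norm_algebraMap, map_pow, Algebra.PowerBasis.norm_gen_eq_coeff_zero_minpoly,
      hmin]
    rw [coeff_sub, coeff_X_pow, coeff_C, if_neg (show ¬(0 = n) by omega), if_pos rfl, zero_sub]
  refine ⟨(-1)^(m*(m-1)/2) * ((n:ℤ)^m * ((-1)^B.dim * (-c))^(n-1)), ?_, ?_⟩
  · rw [Algebra.discr_powerBasis_eq_norm, hnorm]
    push_cast
    ring
  · refine Dvd.dvd.mul_left ?_ _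
    refine Dvd.dvd.mul_left ?_ _
    exact pow_dvd_pow_of_dvd (Dvd.dvd.mul_left (dvd_neg.mpr dvd_rfl) _) _

lemma dvd_discr_of_eisenstein {K : Type*} [Field K] [NumberField K] (B : PowerBasis ℚ K)
    (hint : IsIntegral ℤ B.gen) {r : ℕ} (hr : r.Prime)
    (hei : (minpoly ℤ B.gen).IsEisensteinAt (Ideal.span {(r : ℤ)}))
    {G : ℤ} (hG : Algebra.discr ℚ ⇑B.basis = (G : ℚ)) {k : ℕ} (hdvd : (r:ℤ) ^ k ∣ G) :
    (r:ℤ) ^ k ∣ (NumberField.discr K) := by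
  classical
  have hrz : Prime (r : ℤ) := Nat.prime_iff_prime_int.mp hr
  set ι := Module.Free.ChooseBasisIndex ℤ (𝓞 K) with hι
  let b' : Basis ι ℚ K := integralBasis K
  let e : Fin B.dim ≃ ι := B.basis.indexEquiv b'
  let bB : Basis ι ℚ K := B.basis.reindex e
  have hbB : ∀ j : ι, bB j = B.gen ^ ((e.symm j) : ℕ) := by
    intro j; simp [bB, Basis.reindex_apply, PowerBasis.coe_basis]
  have hrep : ∀ x : K, IsIntegral ℤ x → ∀ i, ∃ z : ℤ, b'.repr x i = (z : ℚ) := by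
    intro x hx i
    refine ⟨(RingOfIntegers.basis K).repr ⟨x, hx⟩ i, ?_⟩
    have := (integralBasis_repr_apply K ⟨x, hx⟩ i).symm
    exact this.symm
  set M : Matrix ι ι ℚ := b'.toMatrix ⇑bB with hM
  have hMint : ∀ i j, IsIntegral ℤ (M i j) := by
    intro i j
    obtain ⟨z, hz⟩ := hrep (bB j) (by rw [hbB]; exact hint.pow _) i
    rw [hM, Basis.toMatrix_apply, hz]
    exact isIntegral_algebraMap (x := z)
  obtain ⟨d, hd⟩ := IsIntegrallyClosed.isIntegral_iff.1 (IsIntegral.det hMint)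
  have hdiscr : (G : ℚ) = (d:ℚ)^2 * (NumberField.discr K : ℚ) := by
    rw [← hG, show ((NumberField.discr K : ℚ)) = Algebra.discr ℚ ⇑b' from NumberField.coe_discr K]
    have h1 : Algebra.discr ℚ ⇑B.basis = Algebra.discr ℚ ⇑bB := by
      rw [show ⇑bB = ⇑B.basis ∘ ⇑e.symm from Basis.coe_reindex _ _,
        Algebra.discr_reindex ℚ B.basis e]
    have h2 := Algebra.discr_of_matrix_vecMul (A := ℚ) (B := K) ⇑b' M
    rw [Basis.toMatrix_map_vecMul b' ⇑bB] at h2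
    rw [h1, h2, ← hd]
    simp [algebraMap_int_eq]
  have hGd : G = d^2 * (NumberField.discr K) := by exact_mod_cast hdiscr
  have hG0 : G ≠ 0 := by
    intro h
    exact Algebra.discr_not_zero_of_basis ℚ B.basis (by rw [hG, h]; norm_num)
  set k' := G.natAbs.factorization r with hk'
  set m₀ := G.natAbs / r ^ k' with hm₀def
  have hfact : r ^ k' * m₀ = G.natAbs := Nat.ordProj_mul_ordCompl_eq_self G.natAbs r
  have hm₀ : ¬ r ∣ m₀ := Nat.not_dvd_ordCompl hr (Int.natAbs_ne_zero.2 hG0)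
  have hsmul : ∀ z : K, IsIntegral ℤ z → ((m₀:ℤ) • z) ∈ Algebra.adjoin ℤ {B.gen} := by
    intro z hz
    have h1 : Algebra.discr ℚ ⇑B.basis • z ∈ Algebra.adjoin ℤ {B.gen} :=
      Algebra.discr_mul_isIntegral_mem_adjoin ℚ hint hz
    rw [hG, Int.cast_smul_eq_zsmul] at h1
    have h2 : ((r:ℤ) ^ k' * (m₀:ℤ)) • z ∈ Algebra.adjoin ℤ {B.gen} := by
      rcases Int.natAbs_eq G with h | h
      · have : ((r:ℤ) ^ k' * (m₀:ℤ)) = G := by rw [h]; exact_mod_cast hfact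
        rw [this]; exact h1
      · have : ((r:ℤ) ^ k' * (m₀:ℤ)) = -G := by
          rw [h, neg_neg]; exact_mod_cast hfact
        rw [this, neg_smul]
        exact Subalgebra.neg_mem _ h1
    rw [mul_smul] at h2
    exact mem_adjoin_of_smul_prime_pow_smul_of_minpoly_isEisensteinAt (K := ℚ) hrz hint
      (hz.smul _) h2 hei
  have hdegP : (minpoly ℤ B.gen).natDegree = B.dim := by
    have h1 := minpoly.isIntegrallyClosed_eq_field_fractions ℚ K hint
    simp only [Algebra.algebraMap_self, Polynomial.map_id, id_eq] at h1
    have h1' : minpoly ℚ B.gen = map (algebraMap ℤ ℚ) (minpoly ℤ B.gen) := by simpa using h1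
    have h2 : (minpoly ℚ B.gen).natDegree = B.dim := B.natDegree_minpoly
    rwa [h1', natDegree_map_eq_of_injective (algebraMap ℤ ℚ).injective_int] at h2
  have hw : ∀ z : K, z ∈ Algebra.adjoin ℤ {B.gen} → ∃ w : ι → ℤ,
      z = ∑ j : ι, w j • bB j := by
    intro z hz
    rw [Algebra.adjoin_singleton_eq_range_aeval] at hz
    obtain ⟨Q, hQ⟩ := hz
    have hPm : (minpoly ℤ B.gen).Monic := minpoly.monic hint
    have hP1 : (minpoly ℤ B.gen) ≠ 1 := by
      intro h; rw [h, natDegree_one] at hdegP; exact B.dim_pos.ne hdegP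
    have hz' : z = aeval B.gen (Q %ₘ minpoly ℤ B.gen) := by
      calc z = aeval B.gen Q := by rw [← hQ]; rfl
      _ = aeval B.gen (Q %ₘ minpoly ℤ B.gen + minpoly ℤ B.gen * (Q /ₘ minpoly ℤ B.gen)) := by
            rw [modByMonic_add_div Q (minpoly ℤ B.gen)]
      _ = _ := by rw [map_add, map_mul, minpoly.aeval, zero_mul, add_zero]
    have hdeg : (Q %ₘ minpoly ℤ B.gen).natDegree < B.dim := by
      rw [← hdegP]
      exact natDegree_modByMonic_lt Q hPm hP1
    refine ⟨fun j => (Q %ₘ minpoly ℤ B.gen).coeff ((e.symm j) : ℕ), ?_⟩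
    rw [hz', aeval_eq_sum_range' hdeg]
    rw [← Fin.sum_univ_eq_sum_range (fun i => (Q %ₘ minpoly ℤ B.gen).coeff i • B.gen ^ i)]
    rw [← Equiv.sum_comp e.symm
      (fun i => (Q %ₘ minpoly ℤ B.gen).coeff (i:ℕ) • B.gen ^ (i:ℕ))]
    refine Finset.sum_congr rfl fun j _ => ?_
    rw [hbB]
  have hb'int : ∀ i : ι, IsIntegral ℤ (b' i) := by
    intro i
    rw [show b' i = algebraMap (𝓞 K) K (RingOfIntegers.basis K i) from integralBasis_apply K i]
    exact RingOfIntegers.isIntegral_coe _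
  choose w hwspec using fun i : ι => hw _ (hsmul (b' i) (hb'int i))
  set CInt : Matrix ι ι ℤ := fun j i => w i j with hC
  have hMC : M * CInt.map (Int.cast : ℤ → ℚ) = (m₀ : ℚ) • 1 := by
    ext k₀ i
    have hrepr : b'.repr ((m₀:ℤ) • b' i) k₀ = ∑ j : ι, (w i j : ℚ) * M k₀ j := by
      conv_lhs => rw [hwspec i]
      rw [map_sum, Finsupp.coe_finset_sum, Finset.sum_apply]
      refine Finset.sum_congr rfl fun j _ => ?_
      rw [map_zsmul, hM, Basis.toMatrix_apply, Finsupp.smul_apply, zsmul_eq_mul]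
    have hlhs : b'.repr ((m₀:ℤ) • b' i) k₀ = if k₀ = i then (m₀:ℚ) else 0 := by
      rw [map_zsmul, Basis.repr_self, Finsupp.smul_apply]
      rcases eq_or_ne k₀ i with h | h
      · subst h; simp
      · simp [Finsupp.single_apply, Ne.symm h, h]
    have hsum : ∑ j, M k₀ j * ((CInt.map (Int.cast : ℤ → ℚ)) j i)
        = ∑ j : ι, (w i j : ℚ) * M k₀ j := by
      refine Finset.sum_congr rfl fun j _ => ?_
      rw [Matrix.map_apply]
      simp only [hC]
      ring
    rw [Matrix.mul_apply, hsum, ← hrepr, hlhs, Matrix.smul_apply, Matrix.one_apply]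
    split <;> simp
  have hdet := congrArg Matrix.det hMC
  rw [Matrix.det_mul, Matrix.det_smul, Matrix.det_one, mul_one,
    show CInt.map (Int.cast : ℤ → ℚ) = (Int.castRingHom ℚ).mapMatrix CInt from rfl,
    ← RingHom.map_det, ← hd] at hdet
  simp only [algebraMap_int_eq, Int.coe_castRingHom] at hdet
  have hd_dvd : d ∣ (m₀:ℤ)^(Fintype.card ι) := ⟨CInt.det, by exact_mod_cast hdet.symm⟩
  have hrd : ¬ (r:ℤ) ∣ d := by
    intro hdvd'
    have h1 : (r:ℤ) ∣ (m₀:ℤ)^(Fintype.card ι) := hdvd'.trans hd_dvd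
    have h2 := hrz.dvd_of_dvd_pow h1
    rw [Int.natCast_dvd_natCast] at h2
    exact hm₀ h2
  have hcop : IsCoprime ((r:ℤ)^k) (d^2) :=
    IsCoprime.pow ((hrz.coprime_iff_not_dvd).2 hrd)
  exact hcop.dvd_of_dvd_mul_left (hGd ▸ hdvd)

lemma gen_powerBasis {K : Type*} [Field K] [NumberField K] {θ : K} {n : ℕ} (hn : 0 < n)
    {c : ℤ} (hθ : θ ^ n = (c : K)) (hirr : Irreducible (X^n - C (c:ℚ) : ℚ[X]))
    (hrank : Module.finrank ℚ K = n) :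
    ∃ B : PowerBasis ℚ K, B.gen = θ ∧ IsIntegral ℤ θ ∧
      minpoly ℚ θ = X^n - C (c:ℚ) ∧ minpoly ℤ θ = X^n - C c := by
  have hmonQ : (X^n - C (c:ℚ) : ℚ[X]).Monic := monic_X_pow_sub_C _ hn.ne'
  have hmonZ : (X^n - C c : ℤ[X]).Monic := monic_X_pow_sub_C _ hn.ne'
  have haevQ : aeval θ (X^n - C (c:ℚ) : ℚ[X]) = 0 := by
    rw [map_sub, aeval_X_pow, aeval_C, hθ]
    simp
  have haevZ : aeval θ (X^n - C c : ℤ[X]) = 0 := by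
    rw [map_sub, aeval_X_pow, aeval_C, hθ]
    simp
  have hminQ : minpoly ℚ θ = X^n - C (c:ℚ) :=
    (minpoly.eq_of_irreducible_of_monic hirr haevQ hmonQ).symm
  have hint : IsIntegral ℤ θ := ⟨X^n - C c, hmonZ, by simpa [aeval_def] using haevZ⟩
  have hminZ : minpoly ℤ θ = X^n - C c := by
    refine monic_eq_of_dvd hmonZ (minpoly.monic hint)
      (minpoly.isIntegrallyClosed_dvd hint haevZ) ?_
    have h1 := minpoly.isIntegrallyClosed_eq_field_fractions ℚ K hint
    have h1' : minpoly ℚ θ = map (algebraMap ℤ ℚ) (minpoly ℤ θ) := by simpa using h1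
    have : (minpoly ℚ θ).natDegree = (minpoly ℤ θ).natDegree := by
      rw [h1', natDegree_map_eq_of_injective (algebraMap ℤ ℚ).injective_int]
    rw [natDegree_X_pow_sub_C, ← this, hminQ, natDegree_X_pow_sub_C]
  have hQint : IsIntegral ℚ θ := IsIntegral.of_finite ℚ θ
  have hfr : Module.finrank ℚ (ℚ⟮θ⟯ : IntermediateField ℚ K) = n := by
    rw [IntermediateField.adjoin.finrank hQint, hminQ, natDegree_X_pow_sub_C]
  have htop : (ℚ⟮θ⟯ : IntermediateField ℚ K) = ⊤ := by
    refine IntermediateField.eq_of_le_of_finrank_le le_top ?_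
    rw [hfr]
    have : Module.finrank ℚ (⊤ : IntermediateField ℚ K) = Module.finrank ℚ K :=
      (IntermediateField.topEquiv (F := ℚ) (E := K)).toLinearEquiv.finrank_eq
    rw [this, hrank]
  let eq1 : (ℚ⟮θ⟯ : IntermediateField ℚ K) ≃ₐ[ℚ] K :=
    (IntermediateField.equivOfEq htop).trans IntermediateField.topEquiv
  refine ⟨(IntermediateField.adjoin.powerBasis hQint).map eq1, ?_, hint, hminQ, hminZ⟩
  simp [PowerBasis.map_gen, IntermediateField.adjoin.powerBasis_gen, eq1]

lemma weilHeight_eq {n : ℕ} (hn : 0 < n) {p q : ℕ} (hp0 : 0 < p) (hpq : p < q)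
    (hcop : IsCoprime (p:ℤ) (q:ℤ)) (z : ℂ)
    (hminz : minpoly ℚ z = X^n - C ((p:ℚ)/q)) :
    weilHeight z = (q : ℝ) ^ ((1:ℝ) / n) := by
  have hq0 : 0 < q := hp0.trans hpq
  have hqQ : ((q:ℚ)) ≠ 0 := by positivity
  set g : ℚ[X] := X^n - C ((p:ℚ)/q) with hg
  have hgmon : g.Monic := monic_X_pow_sub_C _ hn.ne'
  set f₂ : ℤ[X] := C (q:ℤ) * X^n - C (p:ℤ) with hf₂
  have hmapf₂ : f₂.map (Int.castRingHom ℚ) = C (q:ℚ) * g := by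
    rw [hf₂, hg, Polynomial.map_sub, Polynomial.map_mul, Polynomial.map_pow, map_C, map_X,
      mul_sub, ← C_mul, mul_div_cancel₀ _ hqQ]
    simp
  have hf₂prim : f₂.IsPrimitive := by
    intro r hr
    have h1 : r ∣ (q:ℤ) := by
      have := (C_dvd_iff_dvd_coeff r f₂).1 hr n
      rw [hf₂, coeff_sub, coeff_C_mul, coeff_X_pow, coeff_C, if_pos rfl,
        if_neg (show ¬ (n = 0) by omega), mul_one, sub_zero] at this
      exact this
    have h2 : r ∣ (p:ℤ) := by
      have := (C_dvd_iff_dvd_coeff r f₂).1 hr 0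
      rw [hf₂, coeff_sub, coeff_C_mul, coeff_X_pow, coeff_C,
        if_neg (show ¬ (0 = n) by omega), if_pos rfl, mul_zero, zero_sub, dvd_neg] at this
      exact this
    exact hcop.isUnit_of_dvd' h2 h1
  set iN := IsLocalization.integerNormalization (nonZeroDivisors ℤ) g with hiN
  set h := intMinpoly z with hh
  have hprim : h.IsPrimitive := by
    rw [hh, intMinpoly, hminz]
    exact isPrimitive_primPart _
  have hg0 : g ≠ 0 := hgmon.ne_zero
  have hiN0 : iN ≠ 0 := fun habs =>
    hg0 (IsFractionRing.integerNormalization_eq_zero_iff.1 habs)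
  obtain ⟨b, hb⟩ := IsLocalization.integerNormalization_map_to_map (nonZeroDivisors ℤ) g
  have hb0 : ((b:ℤ):ℚ) ≠ 0 := by
    exact_mod_cast nonZeroDivisors.coe_ne_zero b
  have hcont0 : ((iN.content : ℤ):ℚ) ≠ 0 :=
    (fun habs => hiN0 (content_eq_zero_iff.1 (by exact_mod_cast habs)))
  set γ : ℚ := ((b:ℤ):ℚ) / ((iN.content : ℤ):ℚ) with hγ
  have hγ0 : γ ≠ 0 := div_ne_zero hb0 hcont0
  have hmaph : h.map (Int.castRingHom ℚ) = C γ * g := by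
    have h1 : iN = C iN.content * h := by
      rw [hh, intMinpoly, hminz, ← hiN]
      exact eq_C_content_mul_primPart _
    have h2 := hb
    rw [← hiN, h1, Polynomial.map_mul, map_C] at h2
    have h3 : ((b:ℤ) • g : ℚ[X]) = C ((b:ℤ):ℚ) * g := by
      rw [zsmul_eq_mul, ← C_eq_intCast]
    rw [h3] at h2
    have h4 : C ((iN.content:ℤ):ℚ) * (C γ * g) = C ((b:ℤ):ℚ) * g := by
      rw [← mul_assoc, ← C_mul, hγ, mul_div_cancel₀ _ hcont0]
    refine mul_left_cancel₀ (show (C ((iN.content:ℤ):ℚ)) ≠ 0 from fun habs => hcont0 (by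
      simpa using congrArg (fun P => coeff P 0) habs)) ?_
    rw [h4, ← h2]
    simp [algebraMap_int_eq]
  -- h and f₂ are associated
  have hdvd1 : h ∣ f₂ := by
    rw [Polynomial.IsPrimitive.Int.dvd_iff_map_cast_dvd_map_cast _ _ hprim, hmaph, hmapf₂]
    exact ⟨C ((q:ℚ)/γ), by rw [mul_right_comm, ← C_mul, mul_div_cancel₀ _ hγ0]⟩
  have hdvd2 : f₂ ∣ h := by
    rw [Polynomial.IsPrimitive.Int.dvd_iff_map_cast_dvd_map_cast _ _ hf₂prim, hmaph, hmapf₂]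
    exact ⟨C (γ/(q:ℚ)), by rw [mul_right_comm, ← C_mul, mul_div_cancel₀ _ hqQ]⟩
  obtain ⟨u, hu⟩ := associated_of_dvd_dvd hdvd1 hdvd2
  obtain ⟨r, hrunit, hCr⟩ := Polynomial.isUnit_iff.1 u.isUnit
  have hf₂h : f₂ = h * C r := by rw [hCr]; exact hu.symm
  -- γ = ± q
  have hlead : (q:ℚ) = γ * (r:ℚ) := by
    have := congrArg (fun P => P.map (Int.castRingHom ℚ)) hf₂h
    simp only [Polynomial.map_mul, map_C] at this
    rw [hmapf₂, hmaph] at this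
    have := congrArg leadingCoeff this
    simp only [leadingCoeff_mul, leadingCoeff_C, hgmon.leadingCoeff, mul_one] at this
    simpa using this
  have habsγ : |(γ:ℚ)| = (q:ℚ) := by
    rcases Int.isUnit_iff.1 hrunit with hr1 | hr1 <;> rw [hr1] at hlead
    · push_cast at hlead
      rw [mul_one] at hlead
      rw [← hlead, abs_of_pos (by positivity)]
    · push_cast at hlead
      have : γ = -(q:ℚ) := by linarith [hlead]
      rw [this, abs_neg, abs_of_pos (by positivity)]
  -- compute the Mahler measure
  have hmapC : h.map (Int.castRingHom ℂ) = C ((γ:ℚ):ℂ) * g.map (algebraMap ℚ ℂ) := by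
    have : h.map (Int.castRingHom ℂ) = (h.map (Int.castRingHom ℚ)).map (algebraMap ℚ ℂ) := by
      rw [Polynomial.map_map,
        show (algebraMap ℚ ℂ).comp (Int.castRingHom ℚ) = (Int.castRingHom ℂ) from RingHom.ext_int _ _]
    rw [this, hmaph, Polynomial.map_mul, map_C, eq_ratCast (algebraMap ℚ ℂ) γ]
  have hgC : g.map (algebraMap ℚ ℂ) = X^n - C (((p:ℚ)/q : ℚ):ℂ) := by
    rw [hg, Polynomial.map_sub, Polynomial.map_pow, map_X, map_C, eq_ratCast (algebraMap ℚ ℂ)]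
  have hγC0 : ((γ:ℚ):ℂ) ≠ 0 := by exact_mod_cast hγ0
  have hroots : ∀ w ∈ (h.map (Int.castRingHom ℂ)).roots, max 1 ‖w‖ = 1 := by
    intro w hw
    rw [hmapC, roots_C_mul _ hγC0] at hw
    have hw' := isRoot_of_mem_roots hw
    rw [hgC] at hw'
    have hwn : w^n = (((p:ℚ)/q : ℚ):ℂ) := by
      have := hw'
      simp only [IsRoot.def, eval_sub, eval_pow, eval_X, eval_C] at this
      linear_combination this
    have habs : ‖w‖ ^ n = (p:ℝ)/q := by
      have := congrArg norm hwn
      rwa [norm_pow, show ‖(((p:ℚ)/q : ℚ):ℂ)‖ = (p:ℝ)/q by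
        rw [show (((p:ℚ)/q : ℚ):ℂ) = (((p:ℝ)/q : ℝ):ℂ) by push_cast; ring,
          Complex.norm_real, Real.norm_eq_abs, abs_of_pos (by positivity)]] at this
    have hle : ‖w‖ ≤ 1 := by
      by_contra hgt
      push_neg at hgt
      have : (1:ℝ) < ‖w‖ ^ n := one_lt_pow₀ hgt hn.ne'
      rw [habs] at this
      have : (p:ℝ)/q < 1 := by
        rw [div_lt_one (by positivity)]
        exact_mod_cast hpq
      linarith
    exact max_eq_left hle
  have hmm : _root_.mahlerMeasure (h.map (Int.castRingHom ℂ)) = (q:ℝ) := by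
    rw [_root_.mahlerMeasure]
    have h1 : (h.map (Int.castRingHom ℂ)).leadingCoeff = ((γ:ℚ):ℂ) := by
      rw [hmapC, leadingCoeff_mul, leadingCoeff_C, (hgmon.map _).leadingCoeff, mul_one]
    have h2 : ((h.map (Int.castRingHom ℂ)).roots.map (fun z => max 1 ‖z‖)).prod = 1 :=
      Multiset.prod_eq_one (by
        intro x hx
        obtain ⟨w, hw, rfl⟩ := Multiset.mem_map.1 hx
        exact hroots w hw)
    rw [h1, h2, mul_one]
    rw [show ((γ:ℚ):ℂ) = (((γ:ℚ):ℝ):ℂ) by push_cast; ring, Complex.norm_real, Real.norm_eq_abs]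
    rw [show |((γ:ℚ):ℝ)| = ((|γ|:ℚ):ℝ) by push_cast; ring]
    rw [habsγ]
    push_cast
    ring
  rw [weilHeight, hminz, ← hh, hmm, hg, natDegree_X_pow_sub_C, one_div]

/-- For `n > 1`, primes `p < q`, and `M = ℚ((p/q)^(1/n))`: `(pq)^(n−1)` divides the
discriminant `Δ_M`, and (assuming additionally `q < 2p`)
`H((p/q)^(1/n)) = q^(1/n) ≤ 2^(1/(2n)) · |Δ_M|^(1/(2n(n−1)))`. -/
theorem discr_div_and_height_bound (n : ℕ) (hn : 1 < n) (p q : ℕ)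
    (hp : p.Prime) (hq : q.Prime) (hpq : p < q) (hq2p : q < 2 * p)
    (α : ℝ) (hαpos : 0 < α) (hα : α ^ n = (p : ℝ) / q)
    [NumberField ℚ⟮(α : ℂ)⟯] :
    ((p : ℤ) * q) ^ (n - 1) ∣ NumberField.discr ℚ⟮(α : ℂ)⟯ ∧
      weilHeight (α : ℂ) = (q : ℝ) ^ ((1 : ℝ) / n) ∧
      (q : ℝ) ^ ((1 : ℝ) / n)
        ≤ 2 ^ ((1 : ℝ) / (2 * n)) *
            (|(NumberField.discr ℚ⟮(α : ℂ)⟯ : ℝ)|) ^ ((1 : ℝ) / (2 * n * (n - 1))) := by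
  have hn0 : 0 < n := by omega
  have hp0 : 0 < p := hp.pos
  have hq0 : 0 < q := hq.pos
  have hne : p ≠ q := Nat.ne_of_lt hpq
  have hcoppq : IsCoprime (p:ℤ) (q:ℤ) := by
    rw [Int.isCoprime_iff_gcd_eq_one, Int.gcd_natCast_natCast]
    exact (Nat.coprime_primes hp hq).mpr hne
  set αC : ℂ := (α : ℂ) with hαC_def
  have hqC0 : (q:ℂ) ≠ 0 := Nat.cast_ne_zero.mpr hq0.ne'
  have hαCn : αC ^ n = (p:ℂ)/(q:ℂ) := by
    rw [hαC_def, ← Complex.ofReal_pow, hα]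
    push_cast
    ring
  -- the two auxiliary integers
  set cp : ℤ := (p:ℤ) * (q:ℤ)^(n-1) with hcp
  set cq : ℤ := (p:ℤ)^(n-1) * (q:ℤ) with hcq
  have hppr : Prime (p:ℤ) := Nat.prime_iff_prime_int.mp hp
  have hqpr : Prime (q:ℤ) := Nat.prime_iff_prime_int.mp hq
  have hpdvdcp : (p:ℤ) ∣ cp := Dvd.intro _ rfl
  have hqdvdcq : (q:ℤ) ∣ cq := Dvd.intro_left _ rfl
  have hp2cp : ¬ (p:ℤ)^2 ∣ cp := by
    intro hdvd
    rw [hcp, pow_two] at hdvd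
    have h1 : (p:ℤ) ∣ (q:ℤ)^(n-1) :=
      (mul_dvd_mul_iff_left (show (p:ℤ) ≠ 0 by positivity)).1 hdvd
    have h2 : (p:ℤ) ∣ (q:ℤ) := hppr.dvd_of_dvd_pow h1
    rw [Int.natCast_dvd_natCast] at h2
    exact hne ((Nat.prime_dvd_prime_iff_eq hp hq).mp h2)
  have hq2cq : ¬ (q:ℤ)^2 ∣ cq := by
    intro hdvd
    rw [hcq, pow_two, mul_comm ((p:ℤ)^(n-1)) (q:ℤ)] at hdvd
    have h1 : (q:ℤ) ∣ (p:ℤ)^(n-1) :=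
      (mul_dvd_mul_iff_left (show (q:ℤ) ≠ 0 by positivity)).1 hdvd
    have h2 : (q:ℤ) ∣ (p:ℤ) := hqpr.dvd_of_dvd_pow h1
    rw [Int.natCast_dvd_natCast] at h2
    exact hne ((Nat.prime_dvd_prime_iff_eq hq hp).mp h2).symm
  obtain ⟨heip, hirrZp, hirrQp⟩ := eisen_irred hn0 hppr hpdvdcp hp2cp
  obtain ⟨heiq, hirrZq, hirrQq⟩ := eisen_irred hn0 hqpr hqdvdcq hq2cq
  -- the elements θp, θq of ℂ
  set θpC : ℂ := (q:ℂ) * αC with hθpC_def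
  set θqC : ℂ := (q:ℂ) * αC^(n-1) with hθqC_def
  have hqpow : (q:ℂ)^n = (q:ℂ)^(n-1) * (q:ℂ) := by
    conv_lhs => rw [show n = (n-1)+1 by omega]
    rw [pow_succ]
  have hθpCn : θpC ^ n = (cp : ℂ) := by
    rw [hθpC_def, mul_pow, hαCn, hqpow, hcp]
    push_cast
    field_simp
  have hθqCn : θqC ^ n = (cq : ℂ) := by
    rw [hθqC_def, mul_pow, ← pow_mul, mul_comm (n-1) n, pow_mul, hαCn, div_pow, hqpow, hcq]
    push_cast
    field_simp
  -- memberships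
  have hαmem : αC ∈ ℚ⟮αC⟯ := mem_adjoin_simple_self ℚ αC
  have hθpmem : θpC ∈ ℚ⟮αC⟯ := mul_mem (IntermediateField.natCast_mem _ q) hαmem
  have hθqmem : θqC ∈ ℚ⟮αC⟯ := mul_mem (IntermediateField.natCast_mem _ q) (pow_mem hαmem _)
  set K := ℚ⟮αC⟯ with hK
  set θpK : K := ⟨θpC, hθpmem⟩ with hθpK_def
  set θqK : K := ⟨θqC, hθqmem⟩ with hθqK_def
  have hθpKn : θpK ^ n = ((cp : ℤ) : K) := by
    apply Subtype.ext
    push_cast [hθpK_def]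
    exact_mod_cast hθpCn
  have hθqKn : θqK ^ n = ((cq : ℤ) : K) := by
    apply Subtype.ext
    push_cast [hθqK_def]
    exact_mod_cast hθqCn
  -- finrank of K is n
  set gQ : ℚ[X] := X^n - C ((p:ℚ)/q) with hgQ
  have hgQmon : gQ.Monic := monic_X_pow_sub_C _ hn0.ne'
  have haevα : aeval αC gQ = 0 := by
    rw [hgQ, map_sub, aeval_X_pow, aeval_C, hαCn]
    push_cast
    ring
  have hαint : IsIntegral ℚ αC := ⟨gQ, hgQmon, by simpa [aeval_def] using haevα⟩
  have hminθpC : minpoly ℚ θpC = X^n - C ((cp:ℤ):ℚ) := by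
    refine (minpoly.eq_of_irreducible_of_monic hirrQp ?_ (monic_X_pow_sub_C _ hn0.ne')).symm
    rw [map_sub, aeval_X_pow, aeval_C, hθpCn]
    simp
  have hθpCint : IsIntegral ℚ θpC :=
    ⟨X^n - C ((cp:ℤ):ℚ), monic_X_pow_sub_C _ hn0.ne', by
      rw [← aeval_def, map_sub, aeval_X_pow, aeval_C, hθpCn]; simp⟩
  have hrankθp : Module.finrank ℚ ℚ⟮θpC⟯ = n := by
    rw [IntermediateField.adjoin.finrank hθpCint, hminθpC, natDegree_X_pow_sub_C]
  have hle1 : ℚ⟮θpC⟯ ≤ K := by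
    rw [adjoin_simple_le_iff]
    exact hθpmem
  have hrankK : Module.finrank ℚ K = n := by
    have hub : Module.finrank ℚ K ≤ n := by
      have h1 : Module.finrank ℚ K = (minpoly ℚ αC).natDegree :=
        IntermediateField.adjoin.finrank hαint
      rw [h1]
      have := natDegree_le_of_dvd (minpoly.dvd ℚ αC haevα) hgQmon.ne_zero
      rwa [hgQ, natDegree_X_pow_sub_C] at this
    have hlb : n ≤ Module.finrank ℚ K := by
      rw [← hrankθp]
      exact LinearMap.finrank_le_finrank_of_injective
        (Submodule.inclusion_injective (show (ℚ⟮θpC⟯ : IntermediateField ℚ ℂ).toSubalgebra.toSubmodule ≤ K.toSubalgebra.toSubmodule from hle1))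
    omega
  -- minimal polynomial of αC
  have hminα : minpoly ℚ αC = gQ := by
    refine monic_eq_of_dvd hgQmon (minpoly.monic hαint) (minpoly.dvd ℚ αC haevα) ?_
    have h1 : Module.finrank ℚ K = (minpoly ℚ αC).natDegree :=
      IntermediateField.adjoin.finrank hαint
    rw [hgQ, natDegree_X_pow_sub_C, ← h1, hrankK]
  -- power bases
  obtain ⟨Bp, hBpgen, hintp, hminQp, hminZp⟩ := gen_powerBasis hn0 hθpKn hirrQp hrankK
  obtain ⟨Bq, hBqgen, hintq, hminQq, hminZq⟩ := gen_powerBasis hn0 hθqKn hirrQq hrankK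
  obtain ⟨Gp, hGp, hdvdGp⟩ := discr_pb_X_pow_sub_C Bp hn0 (by rw [hBpgen]; exact hminQp)
  obtain ⟨Gq, hGq, hdvdGq⟩ := discr_pb_X_pow_sub_C Bq hn0 (by rw [hBqgen]; exact hminQq)
  have hdvdp : (p:ℤ)^(n-1) ∣ NumberField.discr K := by
    refine dvd_discr_of_eisenstein Bp (hBpgen ▸ hintp) hp ?_ hGp
      ((pow_dvd_pow_of_dvd hpdvdcp _).trans hdvdGp)
    rw [hBpgen, hminZp]
    exact heip
  have hdvdq : (q:ℤ)^(n-1) ∣ NumberField.discr K := by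
    refine dvd_discr_of_eisenstein Bq (hBqgen ▸ hintq) hq ?_ hGq
      ((pow_dvd_pow_of_dvd hqdvdcq _).trans hdvdGq)
    rw [hBqgen, hminZq]
    exact heiq
  have hmain : ((p:ℤ) * q) ^ (n-1) ∣ NumberField.discr K := by
    rw [mul_pow]
    exact (IsCoprime.pow hcoppq).mul_dvd hdvdp hdvdq
  refine ⟨hmain, weilHeight_eq hn0 hp0 hpq hcoppq αC (by rw [hminα]), ?_⟩
  -- the inequality
  have hD0 : NumberField.discr K ≠ 0 := NumberField.discr_ne_zero K
  have habs : ((p*q)^(n-1) : ℤ) ≤ |NumberField.discr K| := by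
    refine Int.le_of_dvd (abs_pos.mpr hD0) ?_
    rw [dvd_abs]
    exact_mod_cast hmain
  have habsR : (((p:ℝ)*q)^(n-1)) ≤ |((NumberField.discr K : ℤ) : ℝ)| := by
    calc (((p:ℝ)*q)^(n-1)) = (((p*q)^(n-1) : ℤ) : ℝ) := by push_cast; ring
      _ ≤ ((|NumberField.discr K| : ℤ) : ℝ) := by exact_mod_cast habs
      _ = |((NumberField.discr K : ℤ) : ℝ)| := by push_cast; ring
  set N : ℝ := (n : ℝ) with hN
  have hN0 : (0:ℝ) < N := by positivity
  have hN1 : (1:ℝ) < N := by rw [hN]; exact_mod_cast hn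
  have hNm1 : (0:ℝ) < N - 1 := by linarith
  have hNne : N ≠ 0 := hN0.ne'
  have e1 : (q:ℝ) ^ ((1:ℝ)/N) = ((q:ℝ)^2) ^ ((1:ℝ)/(2*N)) := by
    rw [← Real.rpow_natCast (q:ℝ) 2, ← Real.rpow_mul (by positivity)]
    congr 1
    push_cast
    field_simp
  have e2 : ((q:ℝ)^2) ^ ((1:ℝ)/(2*N)) ≤ ((2*p*q:ℝ)) ^ ((1:ℝ)/(2*N)) := by
    refine Real.rpow_le_rpow (by positivity) ?_ (by positivity)
    have : (q:ℝ) < 2*p := by exact_mod_cast hq2p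
    nlinarith [hq0, show (0:ℝ) < q by positivity]
  have e3 : ((2*p*q:ℝ)) ^ ((1:ℝ)/(2*N)) = 2 ^ ((1:ℝ)/(2*N)) * ((p*q:ℝ)) ^ ((1:ℝ)/(2*N)) := by
    rw [mul_assoc, Real.mul_rpow (by norm_num) (by positivity)]
  have e4 : ((p*q:ℝ)) ^ ((1:ℝ)/(2*N)) = (((p*q:ℝ))^(n-1)) ^ ((1:ℝ)/(2*N*(N-1))) := by
    rw [← Real.rpow_natCast ((p*q:ℝ)) (n-1), ← Real.rpow_mul (by positivity)]
    congr 1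
    have : ((n-1:ℕ):ℝ) = N - 1 := by
      rw [hN]
      push_cast [Nat.cast_sub hn0]
      ring
    rw [this]
    field_simp
  have e5 : (((p*q:ℝ))^(n-1)) ^ ((1:ℝ)/(2*N*(N-1)))
      ≤ |((NumberField.discr K : ℤ) : ℝ)| ^ ((1:ℝ)/(2*N*(N-1))) := by
    refine Real.rpow_le_rpow (by positivity) habsR (by positivity)
  calc (q:ℝ) ^ ((1:ℝ)/N) = ((q:ℝ)^2) ^ ((1:ℝ)/(2*N)) := e1
    _ ≤ ((2*p*q:ℝ)) ^ ((1:ℝ)/(2*N)) := e2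
    _ = 2 ^ ((1:ℝ)/(2*N)) * ((p*q:ℝ)) ^ ((1:ℝ)/(2*N)) := e3
    _ = 2 ^ ((1:ℝ)/(2*N)) * (((p*q:ℝ))^(n-1)) ^ ((1:ℝ)/(2*N*(N-1))) := by rw [e4]
    _ ≤ 2 ^ ((1:ℝ)/(2*N)) * |((NumberField.discr K : ℤ) : ℝ)| ^ ((1:ℝ)/(2*N*(N-1))) := by
        exact mul_le_mul_of_nonneg_left e5 (by positivity)
end
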